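/- Let n ≥ 0 be an integer. For every real s with s - n > 1, the sum over all primes p of log(p) · p^{n-s} / (1 - p^{n-s}) converges, and ∑_p [ -log(1 - p^{n-s}) + s · log(p) · p^{n-s} / (1 - p^{n-s}) ] = log ζ(s-n) - s · ζ′(s-n)/ζ(s-n), where ζ is the Riemann zeta function. In other words, the global Hasse–Weil entropy of affine n-space equals (1 - s·d/ds) log ζ(s-n). -/

import Mathlib

/-- The Riemann zeta function at real arguments, `ζ(s) = ∑_{n≥1} n^{-s}` for `s > 1`. -/
noncomputable def zetaR (s : ℝ) : ℝ := ∑' n : ℕ, ((n : ℝ) + 1) ^ (-s)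

section aux

variable {t : ℝ}

lemma aux_summable_rpow (ht : 1 < t) : Summable (fun k : ℕ => (k : ℝ) ^ (-t)) :=
  Real.summable_nat_rpow.mpr (by linarith)

lemma aux_zetaR_summable (ht : 1 < t) : Summable (fun n : ℕ => ((n : ℝ) + 1) ^ (-t)) := by
  have := (summable_nat_add_iff (f := fun k : ℕ => (k : ℝ) ^ (-t)) 1).mpr (aux_summable_rpow ht)
  simpa [Nat.cast_add] using this

lemma aux_zetaR_pos (ht : 1 < t) : 0 < zetaR t := by
  refine Summable.tsum_pos (aux_zetaR_summable ht) (fun n => Real.rpow_nonneg (by positivity) _) 0 ?_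
  norm_num

lemma aux_zeta_eq (ht : 1 < t) : riemannZeta (t : ℂ) = ((zetaR t : ℝ) : ℂ) := by
  rw [zeta_eq_tsum_one_div_nat_add_one_cpow (by simpa using ht), zetaR, Complex.ofReal_tsum]
  refine tsum_congr fun n => ?_
  rw [Complex.ofReal_cpow (by positivity)]
  push_cast
  rw [Complex.cpow_neg, one_div]

end aux
lemma aux_deriv (t : ℝ) (ht : 1 < t) :
    HasDerivAt zetaR ((deriv riemannZeta (t : ℂ)).re) t ∧
      ((deriv riemannZeta (t : ℂ)) : ℂ) = ((deriv riemannZeta (t : ℂ)).re : ℝ) := by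
  have hne : (t : ℂ) ≠ 1 := by
    simp only [ne_eq, Complex.ofReal_eq_one]; linarith
  have hd : HasDerivAt riemannZeta (deriv riemannZeta (t : ℂ)) (t : ℂ) :=
    (differentiableAt_riemannZeta hne).hasDerivAt
  have h1 : HasDerivAt (fun y : ℝ => riemannZeta (y : ℂ)) (deriv riemannZeta (t : ℂ)) t :=
    hd.comp_ofReal
  have hev : (fun y : ℝ => ((zetaR y : ℝ) : ℂ)) =ᶠ[nhds t] (fun y : ℝ => riemannZeta (y : ℂ)) := by
    filter_upwards [eventually_gt_nhds ht] with y hy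
    exact (aux_zeta_eq hy).symm
  have h2 : HasDerivAt (fun y : ℝ => ((zetaR y : ℝ) : ℂ)) (deriv riemannZeta (t : ℂ)) t :=
    h1.congr_of_eventuallyEq hev
  have hre : HasDerivAt zetaR ((deriv riemannZeta (t : ℂ)).re) t := by
    have := (Complex.reCLM.hasFDerivAt.comp_hasDerivAt t h2)
    simpa [Function.comp_def] using this
  have him : HasDerivAt (fun _ : ℝ => (0 : ℝ)) ((deriv riemannZeta (t : ℂ)).im) t := by
    have := (Complex.imCLM.hasFDerivAt.comp_hasDerivAt t h2)
    simpa [Function.comp_def] using this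
  have him0 : (deriv riemannZeta (t : ℂ)).im = 0 :=
    (him.unique (hasDerivAt_const t 0))
  exact ⟨hre, Complex.ext (by simp) (by simp [him0])⟩
section
variable {t : ℝ}

lemma aux_x_lt_one (ht : 1 < t) (p : Nat.Primes) : ((p : ℕ) : ℝ) ^ (-t) < 1 :=
  Real.rpow_lt_one_of_one_lt_of_neg (by exact_mod_cast p.prop.one_lt) (by linarith)

lemma aux_x_pos (p : Nat.Primes) : 0 < ((p : ℕ) : ℝ) ^ (-t) :=
  Real.rpow_pos_of_pos (by exact_mod_cast p.prop.pos) _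

lemma aux_cpow_eq (p : Nat.Primes) :
    ((p : ℕ) : ℂ) ^ (-(t : ℂ)) = ((((p : ℕ) : ℝ) ^ (-t) : ℝ) : ℂ) := by
  rw [Complex.ofReal_cpow (by positivity)]
  push_cast
  rfl

lemma aux_sumB (ht : 1 < t) :
    Summable (fun p : Nat.Primes => -Real.log (1 - ((p : ℕ) : ℝ) ^ (-t))) ∧
      ∑' p : Nat.Primes, -Real.log (1 - ((p : ℕ) : ℝ) ^ (-t)) = Real.log (zetaR t) := by
  set x : Nat.Primes → ℝ := fun p => ((p : ℕ) : ℝ) ^ (-t) with hx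
  have hxs : Summable x := (aux_summable_rpow ht).subtype _
  have hxC : Summable (fun p : Nat.Primes => ((x p : ℝ) : ℂ)) :=
    Complex.summable_ofReal.mpr hxs
  have hlogC : Summable (fun p : Nat.Primes => Complex.log (1 - ((x p : ℝ) : ℂ))) :=
    hxC.clog_one_sub
  have hterm : ∀ p : Nat.Primes,
      Complex.log (1 - ((x p : ℝ) : ℂ)) = ((Real.log (1 - x p) : ℝ) : ℂ) := by
    intro p
    rw [show (1 : ℂ) - ((x p : ℝ) : ℂ) = ((1 - x p : ℝ) : ℂ) by push_cast; ring,
      Complex.ofReal_log (by have := aux_x_lt_one ht p; simp only [hx] at this ⊢; linarith)]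
  have hlogR : Summable (fun p : Nat.Primes => Real.log (1 - x p)) := by
    rw [← Complex.summable_ofReal]
    exact hlogC.congr fun p => hterm p
  refine ⟨hlogR.neg, ?_⟩
  have hEuler := riemannZeta_eulerProduct_exp_log (s := (t : ℂ)) (by simpa using ht)
  have hsum_eq : (∑' p : Nat.Primes, -Complex.log (1 - ((p : ℕ) : ℂ) ^ (-(t : ℂ))))
      = ((∑' p : Nat.Primes, -Real.log (1 - x p) : ℝ) : ℂ) := by
    rw [Complex.ofReal_tsum]
    refine tsum_congr fun p => ?_
    rw [aux_cpow_eq p, hterm p]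
    push_cast
    ring
  rw [hsum_eq] at hEuler
  rw [← Complex.ofReal_exp] at hEuler
  rw [aux_zeta_eq ht] at hEuler
  have hexp : Real.exp (∑' p : Nat.Primes, -Real.log (1 - x p)) = zetaR t :=
    Complex.ofReal_injective hEuler
  rw [← hexp, Real.log_exp]

end
open ArithmeticFunction in
lemma aux_sumA {t : ℝ} (ht : 1 < t) :
    Summable (fun p : Nat.Primes =>
      Real.log ((p : ℕ) : ℝ) * ((p : ℕ) : ℝ) ^ (-t) / (1 - ((p : ℕ) : ℝ) ^ (-t))) ∧
    ∑' p : Nat.Primes,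
        Real.log ((p : ℕ) : ℝ) * ((p : ℕ) : ℝ) ^ (-t) / (1 - ((p : ℕ) : ℝ) ^ (-t))
      = -(deriv riemannZeta (t : ℂ)).re / zetaR t := by
  classical
  set f : ℕ → ℝ := fun m => Λ m * (m : ℝ) ^ (-t) with hf
  -- complex L-series summability transfers to f
  have htC : 1 < (t : ℂ).re := by simpa using ht
  have hterm : ∀ m : ℕ, LSeries.term (fun n => (Λ n : ℂ)) (t : ℂ) m = ((f m : ℝ) : ℂ) := by
    intro m
    rcases eq_or_ne m 0 with rfl | hm
    · simp [hf]
    · rw [LSeries.term_of_ne_zero hm]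
      have hmpos : (0 : ℝ) < (m : ℝ) := by exact_mod_cast Nat.pos_of_ne_zero hm
      simp only [hf]
      rw [Real.rpow_neg hmpos.le, Complex.ofReal_mul, Complex.ofReal_inv,
        Complex.ofReal_cpow hmpos.le]
      push_cast
      rw [div_eq_mul_inv]
  have hLSsum : LSeriesSummable (fun n => (Λ n : ℂ)) (t : ℂ) :=
    ArithmeticFunction.LSeriesSummable_vonMangoldt htC
  have hfs : Summable f :=
    Complex.summable_ofReal.mp (hLSsum.congr hterm)
  -- value of the L-series
  have hLval : LSeries (fun n => (Λ n : ℂ)) (t : ℂ) = ((∑' m, f m : ℝ) : ℂ) := by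
    rw [LSeries, Complex.ofReal_tsum]
    exact tsum_congr fun m => hterm m
  have hLtarget := LSeries_vonMangoldt_eq_deriv_riemannZeta_div htC
  rw [hLval, (aux_deriv t ht).2, aux_zeta_eq ht] at hLtarget
  have htsumf : ∑' m, f m = -(deriv riemannZeta (t : ℂ)).re / zetaR t := by
    apply Complex.ofReal_injective
    rw [hLtarget]
    push_cast
    ring
  -- support of f is contained in prime powers
  have hsupp : Function.support f ⊆ {m | IsPrimePow m} := by
    intro m hm
    simp only [Function.mem_support, hf] at hm
    by_contra hc
    exact hm (by rw [ArithmeticFunction.vonMangoldt_eq_zero_iff.mpr hc, zero_mul])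
  have hrearr := tsum_eq_tsum_primes_of_support_subset_prime_powers hfs hsupp
  -- fiber values
  have hfiber : ∀ p : Nat.Primes, ∀ k : ℕ,
      f ((p : ℕ) ^ (k + 1)) = Real.log ((p : ℕ) : ℝ) * (((p : ℕ) : ℝ) ^ (-t)) ^ (k + 1) := by
    intro p k
    have hppos : (0 : ℝ) ≤ ((p : ℕ) : ℝ) := by positivity
    simp only [hf]
    rw [ArithmeticFunction.vonMangoldt_apply_pow (Nat.succ_ne_zero k),
      ArithmeticFunction.vonMangoldt_apply_prime p.prop]
    congr 1
    push_cast
    rw [← Real.rpow_natCast (((p : ℕ) : ℝ) ^ (-t)) (k + 1), ← Real.rpow_natCast ((p : ℕ) : ℝ) (k + 1),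
      ← Real.rpow_mul hppos, ← Real.rpow_mul hppos]
    ring_nf
  have hfibersum : ∀ p : Nat.Primes,
      ∑' k : ℕ, f ((p : ℕ) ^ (k + 1))
        = Real.log ((p : ℕ) : ℝ) * ((p : ℕ) : ℝ) ^ (-t) / (1 - ((p : ℕ) : ℝ) ^ (-t)) := by
    intro p
    have hx0 : (0 : ℝ) ≤ ((p : ℕ) : ℝ) ^ (-t) := (aux_x_pos p).le
    have hx1 : ((p : ℕ) : ℝ) ^ (-t) < 1 := aux_x_lt_one ht p
    calc ∑' k : ℕ, f ((p : ℕ) ^ (k + 1))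
        = ∑' k : ℕ, Real.log ((p : ℕ) : ℝ) * ((((p : ℕ) : ℝ) ^ (-t)) * (((p : ℕ) : ℝ) ^ (-t)) ^ k) := by
          refine tsum_congr fun k => ?_
          rw [hfiber p k, pow_succ]
          ring
      _ = Real.log ((p : ℕ) : ℝ) * (((p : ℕ) : ℝ) ^ (-t) * ∑' k : ℕ, (((p : ℕ) : ℝ) ^ (-t)) ^ k) := by
          rw [tsum_mul_left, tsum_mul_left]
      _ = _ := by
          rw [tsum_geometric_of_lt_one hx0 hx1]
          rw [div_eq_mul_inv]
          ring
  -- injectivity and summability over pairs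
  have hgeq : (fun pk : Nat.Primes × ℕ => ((pk.1 : ℕ) ^ (pk.2 + 1)))
      = Subtype.val ∘ Nat.Primes.prodNatEquiv := by
    funext pk
    exact (Nat.Primes.coe_prodNatEquiv_apply pk.1 pk.2).symm
  have hinj : Function.Injective (fun pk : Nat.Primes × ℕ => ((pk.1 : ℕ) ^ (pk.2 + 1))) := by
    rw [hgeq]
    exact Subtype.val_injective.comp Nat.Primes.prodNatEquiv.injective
  have hg : Summable (fun pk : Nat.Primes × ℕ => f ((pk.1 : ℕ) ^ (pk.2 + 1))) :=
    hfs.comp_injective hinj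
  have hnn : 0 ≤ fun pk : Nat.Primes × ℕ => f ((pk.1 : ℕ) ^ (pk.2 + 1)) := by
    intro pk
    exact mul_nonneg ArithmeticFunction.vonMangoldt_nonneg (Real.rpow_nonneg (by positivity) _)
  have hsum2 : Summable (fun p : Nat.Primes => ∑' k : ℕ, f ((p : ℕ) ^ (k + 1))) :=
    ((summable_prod_of_nonneg hnn).mp hg).2
  constructor
  · exact hsum2.congr fun p => hfibersum p
  · calc ∑' p : Nat.Primes,
        Real.log ((p : ℕ) : ℝ) * ((p : ℕ) : ℝ) ^ (-t) / (1 - ((p : ℕ) : ℝ) ^ (-t))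
        = ∑' (p : Nat.Primes) (k : ℕ), f ((p : ℕ) ^ (k + 1)) :=
          tsum_congr fun p => (hfibersum p).symm
      _ = ∑' m, f m := hrearr.symm
      _ = _ := htsumf
/-- the global Hasse–Weil entropy of affine `n`-space equals
`(1 - s·d/ds) log ζ(s - n)`. -/
theorem stmt_3 (n : ℕ) (s : ℝ) (hs : 1 < s - n) :
    Summable (fun p : Nat.Primes =>
      Real.log ((p : ℕ) : ℝ) * ((p : ℕ) : ℝ) ^ ((n : ℝ) - s)
        / (1 - ((p : ℕ) : ℝ) ^ ((n : ℝ) - s))) ∧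
    ∑' p : Nat.Primes,
        (-Real.log (1 - ((p : ℕ) : ℝ) ^ ((n : ℝ) - s))
          + s * Real.log ((p : ℕ) : ℝ) * ((p : ℕ) : ℝ) ^ ((n : ℝ) - s)
            / (1 - ((p : ℕ) : ℝ) ^ ((n : ℝ) - s)))
      = Real.log (zetaR (s - n)) - s * deriv zetaR (s - n) / zetaR (s - n) := by
  have hkey : (n : ℝ) - s = -(s - (n : ℝ)) := by ring
  set t : ℝ := s - (n : ℝ) with hts
  have ht : 1 < t := hs
  have hA := aux_sumA ht
  have hB := aux_sumB ht
  simp only [hkey]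
  refine ⟨hA.1, ?_⟩
  have hptwise : ∀ p : Nat.Primes,
      (-Real.log (1 - ((p : ℕ) : ℝ) ^ (-t))
          + s * Real.log ((p : ℕ) : ℝ) * ((p : ℕ) : ℝ) ^ (-t) / (1 - ((p : ℕ) : ℝ) ^ (-t)))
      = (-Real.log (1 - ((p : ℕ) : ℝ) ^ (-t)))
          + s * (Real.log ((p : ℕ) : ℝ) * ((p : ℕ) : ℝ) ^ (-t) / (1 - ((p : ℕ) : ℝ) ^ (-t))) := by
    intro p
    ring
  rw [tsum_congr hptwise, Summable.tsum_add hB.1 (hA.1.mul_left s), tsum_mul_left, hA.2, hB.2,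
    (aux_deriv t ht).1.deriv]
  ring
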